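/- arXiv:2505.20535 — 2 statements merged into one kernel-verified Lean document; each statement's English description precedes it below -/
import Mathlib

section
/- Fix a relative distance r ∈ ℝ and a nonzero ψ ∈ ℝ^d (d even) with all 2D subspaces ψ^(i) nonzero. Define the key k = 𝐑^r ψ (the [CLS]-like key at position 0) and for position j the rotated query 𝐑^j ψ. Then the dot product (𝐑^j ψ)ᵀ k = Σ_i ‖ψ^(i)‖² cos((r−j)θ_i) is maximized over j at j = r; moreover if the θ_i are such that s·θ_i ∈ 2πℤ for all i implies s = 0, the maximizer j = r is unique. -/
open Real Matrix

/-- The 2D rotation matrix by angle `α`. -/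
noncomputable def rot (α : ℝ) : Matrix (Fin 2) (Fin 2) ℝ :=
  !![Real.cos α, -Real.sin α; Real.sin α, Real.cos α]

/-- The block-diagonal RoPE matrix `𝐑^s` on `ℝ^d` (`d = 2n`), whose `i`-th `2×2` block
is the rotation by angle `s * θ i`. -/
noncomputable def ropeMat {n : ℕ} (θ : Fin n → ℝ) (s : ℝ) :
    Matrix (Fin n × Fin 2) (Fin n × Fin 2) ℝ :=
  fun p q => if p.1 = q.1 then rot (s * θ p.1) p.2 q.2 else 0

lemma ropeMat_mulVec {n : ℕ} (θ : Fin n → ℝ) (s : ℝ) (ψ : Fin n × Fin 2 → ℝ)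
    (i : Fin n) (a : Fin 2) :
    (ropeMat θ s).mulVec ψ (i, a) =
      rot (s * θ i) a 0 * ψ (i, 0) + rot (s * θ i) a 1 * ψ (i, 1) := by
  simp only [Matrix.mulVec, dotProduct, ropeMat, Fintype.sum_prod_type]
  rw [Finset.sum_eq_single i]
  · simp [Fin.sum_univ_two]
  · intro b _ hb
    simp [Ne.symm hb]
  · simp

lemma rope_dot {n : ℕ} (θ : Fin n → ℝ) (r j : ℝ) (ψ : Fin n × Fin 2 → ℝ) :
    dotProduct ((ropeMat θ j).mulVec ψ) ((ropeMat θ r).mulVec ψ) =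
      ∑ i : Fin n, (ψ (i, 0) ^ 2 + ψ (i, 1) ^ 2) * Real.cos ((r - j) * θ i) := by
  simp only [dotProduct, Fintype.sum_prod_type]
  refine Finset.sum_congr rfl fun i _ => ?_
  simp only [Fin.sum_univ_two, ropeMat_mulVec]
  have h0 : ∀ α : ℝ, rot α 0 0 = Real.cos α := by intro α; simp [rot]
  have h1 : ∀ α : ℝ, rot α 0 1 = -Real.sin α := by intro α; simp [rot]
  have h2 : ∀ α : ℝ, rot α 1 0 = Real.sin α := by intro α; simp [rot]
  have h3 : ∀ α : ℝ, rot α 1 1 = Real.cos α := by intro α; simp [rot]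
  rw [h0, h1, h2, h3, h0, h1, h2, h3]
  have h : (r - j) * θ i = r * θ i - j * θ i := by ring
  rw [h, Real.cos_sub]
  ring

/-- With the key `k = 𝐑^r ψ` ([CLS]-like key at position 0) and the query `𝐑^j ψ` at
position `j`, the dot product equals `Σ_i ‖ψ^(i)‖² cos((r−j)θ_i)`, is maximized at
`j = r`, and the maximizer is unique when the only common period of the `θ_i` is `0`. -/
theorem rope_cls_position_recovery {n : ℕ} (θ : Fin n → ℝ) (hθ : ∀ i, 0 < θ i)
    (r : ℝ) (ψ : Fin n × Fin 2 → ℝ) (hψ : ψ ≠ 0)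
    (hblocks : ∀ i : Fin n, ψ (i, 0) ≠ 0 ∨ ψ (i, 1) ≠ 0) :
    (∀ j : ℝ,
        dotProduct ((ropeMat θ j).mulVec ψ) ((ropeMat θ r).mulVec ψ) =
          ∑ i : Fin n, (ψ (i, 0) ^ 2 + ψ (i, 1) ^ 2) * Real.cos ((r - j) * θ i)) ∧
    (∀ j : ℝ,
        dotProduct ((ropeMat θ j).mulVec ψ) ((ropeMat θ r).mulVec ψ) ≤
          dotProduct ((ropeMat θ r).mulVec ψ) ((ropeMat θ r).mulVec ψ)) ∧
    ((∀ s : ℝ, (∀ i : Fin n, ∃ z : ℤ, s * θ i = 2 * Real.pi * z) → s = 0) →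
      ∀ j : ℝ,
        dotProduct ((ropeMat θ j).mulVec ψ) ((ropeMat θ r).mulVec ψ) =
          dotProduct ((ropeMat θ r).mulVec ψ) ((ropeMat θ r).mulVec ψ) →
        j = r) := by
  have hpos : ∀ i : Fin n, 0 < ψ (i, 0) ^ 2 + ψ (i, 1) ^ 2 := by
    intro i
    rcases hblocks i with h | h
    · nlinarith [sq_pos_of_ne_zero h, sq_nonneg (ψ (i, 1))]
    · nlinarith [sq_pos_of_ne_zero h, sq_nonneg (ψ (i, 0))]
  refine ⟨fun j => rope_dot θ r j ψ, fun j => ?_, fun hper j hj => ?_⟩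
  · rw [rope_dot, rope_dot]
    apply Finset.sum_le_sum
    intro i _
    have h1 : Real.cos ((r - j) * θ i) ≤ 1 := Real.cos_le_one _
    have h2 : Real.cos ((r - r) * θ i) = 1 := by simp
    rw [h2]
    nlinarith [hpos i]
  · rw [rope_dot, rope_dot] at hj
    have heach := (Finset.sum_eq_sum_iff_of_le (fun i _ => by
      have h1 : Real.cos ((r - j) * θ i) ≤ 1 := Real.cos_le_one _
      simp only [sub_self, zero_mul, Real.cos_zero]
      nlinarith [hpos i])).mp hj
    have hcos : ∀ i : Fin n, Real.cos ((r - j) * θ i) = 1 := by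
      intro i
      have h := heach i (Finset.mem_univ i)
      simp only [sub_self, zero_mul, Real.cos_zero, mul_one] at h
      have hp := hpos i
      nlinarith [h]
    have hz : r - j = 0 := by
      apply hper
      intro i
      rcases Real.cos_eq_one_iff ((r - j) * θ i) |>.mp (hcos i) with ⟨k, hk⟩
      exact ⟨k, by linarith [hk]⟩
    linarith
end

section
/- For any nonzero q ∈ ℝ^d (d even) and any real distance r, the key k = 𝐑^r q maximizes the RoPE attention score ⟨𝐑^m q, 𝐑^n k'⟩ over all keys k' with ‖k'‖ = ‖q‖ precisely when m − n = r, achieving the value ‖q‖²; by Cauchy–Schwarz no key of equal norm can exceed this value at that relative distance. -/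
open Real Matrix

lemma rot_mul (α β : ℝ) : rot α * rot β = rot (α + β) := by
  ext i j
  fin_cases i <;> fin_cases j <;>
    simp [rot, Matrix.mul_apply, Fin.sum_univ_two, Real.cos_add, Real.sin_add] <;> ring

lemma ropeMat_mul {n : ℕ} (θ : Fin n → ℝ) (a b : ℝ) :
    ropeMat θ a * ropeMat θ b = ropeMat θ (a + b) := by
  ext ⟨i, j⟩ ⟨i', j'⟩
  simp only [ropeMat, Matrix.mul_apply, Fintype.sum_prod_type]
  rw [Finset.sum_eq_single i]
  · by_cases h : i = i'
    · subst h
      simp only [if_pos rfl]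
      have := congrFun (congrFun (rot_mul (a * θ i) (b * θ i)) j) j'
      rw [Matrix.mul_apply, Fin.sum_univ_two] at this
      simp only [if_true]
      rw [Fin.sum_univ_two, this]
      ring_nf
    · simp [h]
  · intro x _ hx
    simp [Ne.symm hx]
  · simp

lemma ropeMat_transpose {n : ℕ} (θ : Fin n → ℝ) (s : ℝ) :
    (ropeMat θ s)ᵀ = ropeMat θ (-s) := by
  ext ⟨i, j⟩ ⟨i', j'⟩
  simp only [Matrix.transpose_apply, ropeMat]
  by_cases h : i' = i
  · subst h
    simp only [if_pos rfl]
    fin_cases j <;> fin_cases j' <;> simp [rot]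
  · simp [h, Ne.symm h]

lemma ropeMat_zero {n : ℕ} (θ : Fin n → ℝ) : ropeMat θ 0 = 1 := by
  ext ⟨i, j⟩ ⟨i', j'⟩
  simp only [ropeMat, Matrix.one_apply]
  by_cases h : i = i'
  · subst h
    simp only [if_pos rfl, Prod.mk.injEq, true_and]
    fin_cases j <;> fin_cases j' <;> simp [rot]
  · have : (i, j) ≠ (i', j') := fun hh => h (congrArg Prod.fst hh)
    simp [h, this]

lemma rope_dot_s18 {n : ℕ} (θ : Fin n → ℝ) (a b : ℝ) (u v : Fin n × Fin 2 → ℝ) :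
    dotProduct ((ropeMat θ a).mulVec u) ((ropeMat θ b).mulVec v) =
      dotProduct u ((ropeMat θ (b - a)).mulVec v) := by
  rw [show ropeMat θ a *ᵥ u = u ᵥ* (ropeMat θ a)ᵀ from (Matrix.vecMul_transpose _ u).symm,
    ← Matrix.dotProduct_mulVec, Matrix.mulVec_mulVec, ropeMat_transpose, ropeMat_mul]
  ring_nf

/-- For any nonzero query `q` and any real distance `r`, the key `k = 𝐑^r q` achieves
the score `‖q‖²` whenever `m − n = r`, and by Cauchy–Schwarz no key of the same norm can
exceed this value at that relative distance. -/
theorem rope_key_construction_no_decay {n : ℕ} (θ : Fin n → ℝ)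
    (q : Fin n × Fin 2 → ℝ) (hq : q ≠ 0) (r : ℝ) :
    (∀ m m' : ℝ, m - m' = r →
      dotProduct ((ropeMat θ m).mulVec q)
          ((ropeMat θ m').mulVec ((ropeMat θ r).mulVec q)) =
        ∑ p : Fin n × Fin 2, q p ^ 2) ∧
    (∀ k' : Fin n × Fin 2 → ℝ,
      (∑ p : Fin n × Fin 2, k' p ^ 2) = ∑ p : Fin n × Fin 2, q p ^ 2 →
      ∀ m m' : ℝ, m - m' = r →
        dotProduct ((ropeMat θ m).mulVec q) ((ropeMat θ m').mulVec k') ≤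
          ∑ p : Fin n × Fin 2, q p ^ 2) := by
  have hdot : ∀ v : Fin n × Fin 2 → ℝ, dotProduct v v = ∑ p, v p ^ 2 := by
    intro v; simp [dotProduct, sq]
  have hnorm : ∀ (s : ℝ) (v : Fin n × Fin 2 → ℝ),
      (∑ p, ((ropeMat θ s).mulVec v) p ^ 2) = ∑ p, v p ^ 2 := by
    intro s v
    rw [← hdot, ← hdot, rope_dot_s18 θ s s v v, sub_self, ropeMat_zero, Matrix.one_mulVec]
  constructor
  · intro m m' hmm
    rw [Matrix.mulVec_mulVec, ropeMat_mul, rope_dot_s18, ← hdot]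
    have : m' + r - m = 0 := by linarith
    rw [this, ropeMat_zero, Matrix.one_mulVec]
  · intro k' hk m m' hmm
    set f := (ropeMat θ m).mulVec q
    set g := (ropeMat θ m').mulVec k'
    have hcs := Finset.sum_mul_sq_le_sq_mul_sq Finset.univ f g
    have hf : (∑ p, f p ^ 2) = ∑ p, q p ^ 2 := hnorm m q
    have hg : (∑ p, g p ^ 2) = ∑ p, q p ^ 2 := by rw [hnorm m' k', hk]
    have hS : (0:ℝ) ≤ ∑ p, q p ^ 2 := Finset.sum_nonneg fun _ _ => sq_nonneg _
    have hdp : dotProduct f g = ∑ p, f p * g p := rfl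
    rw [hf, hg] at hcs
    rw [hdp]
    nlinarith [hcs, hS]
end
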